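/- Let Σ be a real symmetric positive semidefinite p×p matrix, M a real p×K matrix, and θ ∈ ℝ^K. Let a_k denote the k-th column of A. Let U₂ be a real p×K matrix with orthonormal columns whose column span equals the column span of X(X^⊤X)⁻¹A, and let U₃ be a real p×(p−n) matrix with orthonormal columns satisfying U₃U₃^⊤ = I_p − X(X^⊤X)⁻¹X^⊤. Define v_k = ‖θ‖² · a_k^⊤(X^⊤X)⁻¹X^⊤ Σ X(X^⊤X)⁻¹a_k and w_k = a_k^⊤(X^⊤X)⁻¹a_k · [‖θ‖² · trace(U₃^⊤ Σ U₃) + θ^⊤M^⊤U₃U₃^⊤Mθ] / (p−n). Then for every k, v_k − w_k ≤ ‖θ‖² · a_k^⊤(X^⊤X)⁻¹a_k · [λ_max(U₂^⊤ Σ U₂) − trace(U₃^⊤ Σ U₃)/(p−n)], where λ_max denotes the largest eigenvalue of a symmetric matrix. -/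

import Mathlib

open Matrix

private lemma quadForm {m l : Type*} [Fintype m] [Fintype l]
    (S : Matrix m m ℝ) (N : Matrix m l ℝ) (v : l → ℝ) :
    v ⬝ᵥ (Nᵀ * S * N) *ᵥ v = (N *ᵥ v) ⬝ᵥ S *ᵥ (N *ᵥ v) := by
  rw [← mulVec_mulVec, ← mulVec_mulVec, dotProduct_mulVec, vecMul_transpose]

private lemma aux_rayleigh {m : Type*} [Fintype m] [Nonempty m] [DecidableEq m]
    (B : Matrix m m ℝ) (hB : B.IsHermitian) (y : m → ℝ) :
    y ⬝ᵥ B *ᵥ y ≤ (⨆ i, hB.eigenvalues i) * (y ⬝ᵥ y) := by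
  set U : Matrix m m ℝ := (hB.eigenvectorUnitary : Matrix m m ℝ) with hUdef
  have hstar : star U = Uᵀ := by ext i j; simp [Matrix.star_apply]
  have hUU : U * Uᵀ = 1 := by
    rw [← hstar]; exact Unitary.coe_mul_star_self hB.eigenvectorUnitary
  set z := Uᵀ *ᵥ y with hz
  have h1 : y ⬝ᵥ B *ᵥ y = ∑ i, hB.eigenvalues i * (z i)^2 := by
    conv_lhs => rw [hB.spectral_theorem]
    rw [Unitary.conjStarAlgAut_apply, ← hUdef, hstar]
    have : U * diagonal (RCLike.ofReal ∘ hB.eigenvalues) * Uᵀ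
        = (Uᵀ)ᵀ * diagonal (RCLike.ofReal ∘ hB.eigenvalues) * Uᵀ := by rw [transpose_transpose]
    rw [this, quadForm]
    simp [dotProduct, mulVec_diagonal, sq]
    exact Finset.sum_congr rfl fun i _ => by ring
  have h2 : y ⬝ᵥ y = ∑ i, (z i)^2 := by
    have : y ⬝ᵥ y = y ⬝ᵥ ((Uᵀ)ᵀ * 1 * Uᵀ) *ᵥ y := by
      rw [transpose_transpose, mul_one, hUU, one_mulVec]
    rw [this, quadForm, one_mulVec]
    simp [dotProduct, sq]
    rw [hz]
  rw [h1, h2, Finset.mul_sum]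
  refine Finset.sum_le_sum fun i _ => ?_
  exact mul_le_mul_of_nonneg_right (le_ciSup (Set.Finite.bddAbove (Set.finite_range _)) i) (sq_nonneg _)

private lemma dp_self_nonneg {l : Type*} [Fintype l] (v : l → ℝ) : 0 ≤ v ⬝ᵥ v :=
  Finset.sum_nonneg fun i _ => mul_self_nonneg _

/-- Upper bound on the bias `v_k − w_k` of the RTS squared standard errors in
the general source apportionment model. -/
theorem stmt_8 (p n K : ℕ) (hK : 0 < K) (hKn : K ≤ n) (hnp : n < p)
    (X : Matrix (Fin p) (Fin n) ℝ) (A : Matrix (Fin n) (Fin K) ℝ)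
    (hX : IsUnit (Xᵀ * X)) (hA : IsUnit (Aᵀ * A))
    (Sg : Matrix (Fin p) (Fin p) ℝ) (hSg : Sg.PosSemidef)
    (M : Matrix (Fin p) (Fin K) ℝ)
    (θ : EuclideanSpace ℝ (Fin K))
    (U₂ : Matrix (Fin p) (Fin K) ℝ) (hU₂o : U₂ᵀ * U₂ = 1)
    (hU₂span : LinearMap.range (Matrix.mulVecLin U₂)
      = LinearMap.range (Matrix.mulVecLin (X * (Xᵀ * X)⁻¹ * A)))
    (U₃ : Matrix (Fin p) (Fin (p - n)) ℝ) (hU₃o : U₃ᵀ * U₃ = 1)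
    (hU₃ : U₃ * U₃ᵀ = 1 - X * (Xᵀ * X)⁻¹ * Xᵀ)
    (hH : (U₂ᵀ * Sg * U₂).IsHermitian) :
    ∀ k : Fin K,
      ‖θ‖ ^ 2 * ((fun i => A i k) ⬝ᵥ
          ((Xᵀ * X)⁻¹ * Xᵀ * Sg * X * (Xᵀ * X)⁻¹).mulVec (fun i => A i k))
        - ((fun i => A i k) ⬝ᵥ ((Xᵀ * X)⁻¹).mulVec (fun i => A i k)) *
          (‖θ‖ ^ 2 * (U₃ᵀ * Sg * U₃).trace
            + θ ⬝ᵥ (Mᵀ * U₃ * U₃ᵀ * M).mulVec θ) / ((p : ℝ) - (n : ℝ))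
      ≤ ‖θ‖ ^ 2 * ((fun i => A i k) ⬝ᵥ ((Xᵀ * X)⁻¹).mulVec (fun i => A i k)) *
          ((⨆ i, hH.eigenvalues i) - (U₃ᵀ * Sg * U₃).trace / ((p : ℝ) - (n : ℝ))) := by
  intro k
  haveI : Nonempty (Fin K) := Fin.pos_iff_nonempty.mp hK
  set P : Matrix (Fin n) (Fin n) ℝ := (Xᵀ * X)⁻¹ with hPdef
  have hdet : IsUnit (Xᵀ * X).det := (isUnit_iff_isUnit_det _).mp hX
  have hPX : P * (Xᵀ * X) = 1 := nonsing_inv_mul _ hdet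
  have hPsym : Pᵀ = P := by
    rw [hPdef, transpose_nonsing_inv, transpose_mul, transpose_transpose]
  set a : Fin n → ℝ := fun i => A i k with hadef
  set b : Fin p → ℝ := (X * P) *ᵥ a with hbdef
  -- v term as quadratic form in b
  have hVeq : a ⬝ᵥ (P * Xᵀ * Sg * X * P) *ᵥ a = b ⬝ᵥ Sg *ᵥ b := by
    have hmat : P * Xᵀ * Sg * X * P = (X * P)ᵀ * Sg * (X * P) := by
      rw [transpose_mul, hPsym]; simp only [Matrix.mul_assoc]
    rw [hmat, quadForm]
  -- c term as ‖b‖²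
  have hmat2 : (X * P)ᵀ * (1 : Matrix (Fin p) (Fin p) ℝ) * (X * P) = P := by
    rw [Matrix.mul_one, transpose_mul, hPsym, Matrix.mul_assoc, ← Matrix.mul_assoc Xᵀ X P,
      ← Matrix.mul_assoc P (Xᵀ * X) P, hPX, one_mul]
  have hceq : a ⬝ᵥ P *ᵥ a = b ⬝ᵥ b := by
    rw [← hmat2, quadForm, one_mulVec]
  have hc : 0 ≤ a ⬝ᵥ P *ᵥ a := by rw [hceq]; exact dp_self_nonneg b
  -- q term nonneg
  have hq : 0 ≤ θ ⬝ᵥ (Mᵀ * U₃ * U₃ᵀ * M) *ᵥ θ := by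
    have hmat3 : Mᵀ * U₃ * U₃ᵀ * M = (U₃ᵀ * M)ᵀ * (1 : Matrix (Fin (p - n)) (Fin (p - n)) ℝ) * (U₃ᵀ * M) := by
      rw [Matrix.mul_one, transpose_mul, transpose_transpose]; simp only [Matrix.mul_assoc]
    rw [hmat3, quadForm, one_mulVec]
    exact dp_self_nonneg _
  -- b lies in the range of U₂
  have hbmem : b ∈ LinearMap.range (Matrix.mulVecLin U₂) := by
    rw [hU₂span]
    refine ⟨Pi.single k 1, ?_⟩
    rw [mulVecLin_apply, ← mulVec_mulVec]
    congr 1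
    funext i
    simp [mulVec_single, hadef]
  obtain ⟨y, hy⟩ := hbmem
  rw [mulVecLin_apply] at hy
  -- Rayleigh bound
  have hyc : y ⬝ᵥ y = b ⬝ᵥ b := by
    have : y ⬝ᵥ y = y ⬝ᵥ (U₂ᵀ * (1 : Matrix (Fin p) (Fin p) ℝ) * U₂) *ᵥ y := by
      rw [Matrix.mul_one, hU₂o, one_mulVec]
    rw [this, quadForm, one_mulVec, hy]
  have hVle : a ⬝ᵥ (P * Xᵀ * Sg * X * P) *ᵥ a
      ≤ (⨆ i, hH.eigenvalues i) * (a ⬝ᵥ P *ᵥ a) := by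
    rw [hVeq, hceq, ← hyc, ← hy, ← quadForm]
    exact aux_rayleigh _ hH y
  -- final arithmetic
  set L := ⨆ i, hH.eigenvalues i with hLdef
  set V := a ⬝ᵥ (P * Xᵀ * Sg * X * P) *ᵥ a with hVdef
  set c := a ⬝ᵥ P *ᵥ a with hcdef
  set q := θ ⬝ᵥ (Mᵀ * U₃ * U₃ᵀ * M) *ᵥ θ with hqdef
  set t := (U₃ᵀ * Sg * U₃).trace with htdef
  have hd : (0:ℝ) < (p:ℝ) - (n:ℝ) := sub_pos.mpr (by exact_mod_cast hnp)
  have hθ2 : (0:ℝ) ≤ ‖θ‖^2 := sq_nonneg _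
  have key : ‖θ‖^2 * V ≤ ‖θ‖^2 * c * L := by
    calc ‖θ‖^2 * V ≤ ‖θ‖^2 * (L * c) := mul_le_mul_of_nonneg_left hVle hθ2
      _ = ‖θ‖^2 * c * L := by ring
  have hq' : 0 ≤ c * q / ((p:ℝ) - (n:ℝ)) := div_nonneg (mul_nonneg hc hq) hd.le
  have e1 : c * (‖θ‖^2 * t + q) / ((p:ℝ) - (n:ℝ))
      = ‖θ‖^2 * c * (t / ((p:ℝ) - (n:ℝ))) + c * q / ((p:ℝ) - (n:ℝ)) := by
    field_simp
  have e2 : ‖θ‖^2 * c * (L - t / ((p:ℝ) - (n:ℝ)))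
      = ‖θ‖^2 * c * L - ‖θ‖^2 * c * (t / ((p:ℝ) - (n:ℝ))) := by ring
  rw [e1, e2]
  linarith [key, hq']
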